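/- arXiv:1310.0933 — 2 statements merged into one kernel-verified Lean document; each statement's English description precedes it below -/
import Mathlib

section
/- In a Garside monoid of spindle type with atom set X, if b is a positive element not left-divisible by Δ, then there is exactly one word over X representing b. -/
/-- a left-divides b. -/
def LeftDvd {M : Type*} [Monoid M] (a b : M) : Prop := ∃ c : M, b = a * c

/-- a right-divides b. -/
def RightDvd' {M : Type*} [Monoid M] (a b : M) : Prop := ∃ c : M, b = c * a

/-- m is a right lcm of a and b. -/
def IsRightLcm {M : Type*} [Monoid M] (a b m : M) : Prop :=
  LeftDvd a m ∧ LeftDvd b m ∧ ∀ x : M, LeftDvd a x → LeftDvd b x → LeftDvd m x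

/-- m is a left lcm of a and b. -/
def IsLeftLcm {M : Type*} [Monoid M] (a b m : M) : Prop :=
  RightDvd' a m ∧ RightDvd' b m ∧ ∀ x : M, RightDvd' a x → RightDvd' b x → RightDvd' m x

/-- g is a left gcd of a and b. -/
def IsLeftGcd {M : Type*} [Monoid M] (a b g : M) : Prop :=
  LeftDvd g a ∧ LeftDvd g b ∧ ∀ x : M, LeftDvd x a → LeftDvd x b → LeftDvd x g

/-- g is a right gcd of a and b. -/
def IsRightGcd {M : Type*} [Monoid M] (a b g : M) : Prop :=
  RightDvd' g a ∧ RightDvd' g b ∧ ∀ x : M, RightDvd' x a → RightDvd' x b → RightDvd' x g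

/-- A monoid is Noetherian (atomic): the lengths of factorizations of any
    element into non-identity factors are bounded. -/
def NoetherianMonoid (M : Type*) [Monoid M] : Prop :=
  ∀ a : M, ∃ n : ℕ, ∀ l : List M, (∀ x ∈ l, x ≠ 1) → l.prod = a → l.length ≤ n

/-- A Garside monoid structure: a Noetherian cancellative monoid with right and
    left lcms, together with a balanced Garside element Δ whose (finite) set of
    divisors generates the monoid. -/
structure GarsideMonoid (M : Type*) [Monoid M] where
  Δ : M
  noeth : NoetherianMonoid M
  cancel : ∀ a b b' c : M, a * b * c = a * b' * c → b = b'
  rlcm : ∀ a b : M, ∃ m : M, IsRightLcm a b m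
  llcm : ∀ a b : M, ∃ m : M, IsLeftLcm a b m
  balanced : ∀ x : M, LeftDvd x Δ ↔ RightDvd' x Δ
  finS : {x : M | LeftDvd x Δ}.Finite
  genS : Submonoid.closure {x : M | LeftDvd x Δ} = ⊤

/-- The set of simple elements: divisors of the Garside element Δ. -/
def GarsideMonoid.S {M : Type*} [Monoid M] (gs : GarsideMonoid M) : Set M :=
  {x : M | LeftDvd x gs.Δ}

/-- A Garside system is of spindle type if the left and right gcds of any
    two simple elements a, b lie in {a, b, 1}. -/
def GarsideMonoid.SpindleType {M : Type*} [Monoid M] (gs : GarsideMonoid M) : Prop :=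
  (∀ a ∈ gs.S, ∀ b ∈ gs.S, ∀ g : M, IsLeftGcd a b g → g = a ∨ g = b ∨ g = 1) ∧
  (∀ a ∈ gs.S, ∀ b ∈ gs.S, ∀ g : M, IsRightGcd a b g → g = a ∨ g = b ∨ g = 1)

/-- x is an atom: non-identity and admitting no nontrivial factorization. -/
def IsAtomOf (M : Type*) [Monoid M] (x : M) : Prop :=
  x ≠ 1 ∧ ∀ y z : M, x = y * z → y = 1 ∨ z = 1

section GarsideAux

variable {M : Type*} [Monoid M]

lemma gs_lcancel (gs : GarsideMonoid M) {a b c : M} (h : a * b = a * c) : b = c :=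
  gs.cancel a b c 1 (by simpa using h)

lemma gs_rcancel (gs : GarsideMonoid M) {a b c : M} (h : a * c = b * c) : a = b :=
  gs.cancel 1 a b c (by simpa using h)

lemma gs_conical (gs : GarsideMonoid M) {x y : M} (h : x * y = 1) : x = 1 ∧ y = 1 := by
  by_contra hc
  have hx : x ≠ 1 := by
    intro hx1
    exact hc ⟨hx1, by simpa [hx1] using h⟩
  have hy : y ≠ 1 := by
    intro hy1
    exact hx (by simpa [hy1] using h)
  obtain ⟨n, hn⟩ := gs.noeth 1
  have hlen := hn ((List.replicate (n + 1) [x, y]).flatten) ?_ ?_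
  · simp [List.length_flatten] at hlen
    omega
  · intro z hz
    simp only [List.mem_flatten, List.mem_replicate] at hz
    obtain ⟨l, ⟨_, rfl⟩, hzl⟩ := hz
    have : z = x ∨ z = y := by simpa using hzl
    rcases this with rfl | rfl <;> assumption
  · simp [List.prod_flatten, List.map_replicate, List.prod_replicate, h]

lemma gs_one_mem_S (gs : GarsideMonoid M) : (1 : M) ∈ gs.S := ⟨gs.Δ, (one_mul _).symm⟩

lemma gs_prod_atom_mem_S (gs : GarsideMonoid M) : ∀ (l : List M) (a : M), IsAtomOf M a →
    (∀ x ∈ l, x ∈ gs.S) → l.prod = a → a ∈ gs.S := by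
  intro l
  induction l with
  | nil =>
    intro a ha _ hp
    exact absurd (by simpa using hp.symm) ha.1
  | cons s t ih =>
    intro a ha hmem hp
    simp only [List.prod_cons] at hp
    rcases ha.2 s t.prod hp.symm with hs | ht
    · exact ih a ha (fun x hx => hmem x (List.mem_cons_of_mem _ hx))
        (by simpa [hs] using hp)
    · have : a = s := by simpa [ht] using hp.symm
      exact this ▸ hmem s (List.mem_cons_self)

lemma gs_atom_mem_S (gs : GarsideMonoid M) {a : M} (ha : IsAtomOf M a) : a ∈ gs.S := by
  have hmem : a ∈ Submonoid.closure {x : M | LeftDvd x gs.Δ} := by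
    rw [gs.genS]; trivial
  obtain ⟨l, hl, hp⟩ := Submonoid.exists_list_of_mem_closure hmem
  exact gs_prod_atom_mem_S gs l a ha hl hp

lemma gs_rightDvd_trans {a b c : M} (h1 : RightDvd' a b) (h2 : RightDvd' b c) :
    RightDvd' a c := by
  obtain ⟨u, hu⟩ := h1; obtain ⟨v, hv⟩ := h2
  exact ⟨v * u, by rw [hv, hu, mul_assoc]⟩

/-- Right gcds of simple elements exist. -/
lemma gs_exists_rgcd (gs : GarsideMonoid M) {a b : M} (ha : a ∈ gs.S) (hb : b ∈ gs.S) :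
    ∃ g : M, IsRightGcd a b g := by
  set D : Set M := {x : M | x ∈ gs.S ∧ RightDvd' x a ∧ RightDvd' x b} with hD
  have hDS : D ⊆ gs.S := fun x hx => hx.1
  have hfin : D.Finite := gs.finS.subset hDS
  have hmemD : ∀ x : M, RightDvd' x a → RightDvd' x b → x ∈ D := by
    intro x h1 h2
    refine ⟨(gs.balanced x).2 ?_, h1, h2⟩
    exact gs_rightDvd_trans h1 ((gs.balanced a).1 ha)
  -- fold left-lcms through a list enumerating D
  have haux : ∀ l : List M, (∀ x ∈ l, x ∈ D) →
      ∃ g ∈ D, ∀ x ∈ l, RightDvd' x g := by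
    intro l
    induction l with
    | nil =>
      intro _
      exact ⟨1, ⟨gs_one_mem_S gs, ⟨a, (mul_one a).symm⟩, ⟨b, (mul_one b).symm⟩⟩,
        by simp⟩
    | cons d t ih =>
      intro hmem
      obtain ⟨g, hgD, hg⟩ := ih (fun x hx => hmem x (List.mem_cons_of_mem _ hx))
      have hdD := hmem d (List.mem_cons_self)
      obtain ⟨m, hm⟩ := gs.llcm d g
      have hma : RightDvd' m a := hm.2.2 a hdD.2.1 hgD.2.1
      have hmb : RightDvd' m b := hm.2.2 b hdD.2.2 hgD.2.2
      have hmD : m ∈ D := hmemD m hma hmb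
      refine ⟨m, hmD, ?_⟩
      intro x hx
      rcases List.mem_cons.1 hx with hx | hx
      · exact hx ▸ hm.1
      · exact gs_rightDvd_trans (hg x hx) hm.2.1
  obtain ⟨l, hl⟩ := hfin.exists_finset_coe
  obtain ⟨g, hgD, hg⟩ := haux l.toList (by intro x hx; rw [← hl]; simpa using hx)
  refine ⟨g, hgD.2.1, hgD.2.2, ?_⟩
  intro x h1 h2
  have hxD : x ∈ D := hmemD x h1 h2
  exact hg x (by rw [← hl] at hxD; simpa using hxD)

/-- Two distinct atoms dividing a common element force Δ to divide it. -/
lemma gs_key (gs : GarsideMonoid M) (hsp : gs.SpindleType) {a a' c : M} (ha : IsAtomOf M a)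
    (ha' : IsAtomOf M a') (hne : a ≠ a') (h1 : LeftDvd a c) (h2 : LeftDvd a' c) :
    LeftDvd gs.Δ c := by
  obtain ⟨m, hm⟩ := gs.rlcm a a'
  have hmc : LeftDvd m c := hm.2.2 c h1 h2
  have haS := gs_atom_mem_S gs ha
  have ha'S := gs_atom_mem_S gs ha'
  obtain ⟨da, hda⟩ := haS
  obtain ⟨da', hda'⟩ := ha'S
  obtain ⟨e, he⟩ := hm.2.2 gs.Δ ⟨da, hda⟩ ⟨da', hda'⟩
  obtain ⟨u, hu⟩ := hm.1
  obtain ⟨u', hu'⟩ := hm.2.1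
  have hda_eq : da = u * e := gs_lcancel gs (by rw [← hda, he, hu, mul_assoc])
  have hda'_eq : da' = u' * e := gs_lcancel gs (by rw [← hda', he, hu', mul_assoc])
  have hdaS : da ∈ gs.S := (gs.balanced da).2 ⟨a, hda⟩
  have hda'S : da' ∈ gs.S := (gs.balanced da').2 ⟨a', hda'⟩
  obtain ⟨g, hg⟩ := gs_exists_rgcd gs hdaS hda'S
  have hge : RightDvd' e g := hg.2.2 e ⟨u, hda_eq⟩ ⟨u', hda'_eq⟩
  rcases hsp.2 da hdaS da' hda'S g hg with hcase | hcase | hcase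
  · -- g = da : then da right-divides da', forcing a = a'
    exfalso
    obtain ⟨f, hf⟩ := hcase ▸ hg.2.1
    have : a' * f = a := gs_rcancel gs (by rw [mul_assoc, ← hf, ← hda', hda])
    rcases ha.2 a' f this.symm with h' | h'
    · exact ha'.1 h'
    · exact hne (by rw [← this, h', mul_one])
  · -- g = da' : symmetric
    exfalso
    obtain ⟨f, hf⟩ := hcase ▸ hg.1
    have : a * f = a' := gs_rcancel gs (by rw [mul_assoc, ← hf, ← hda, hda'])
    rcases ha'.2 a f this.symm with h' | h'
    · exact ha.1 h'
    · exact hne (by rw [← this, h', mul_one])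
  · -- g = 1 : then e = 1, so m = Δ
    obtain ⟨f, hf⟩ := hcase ▸ hge
    have he1 : e = 1 := (gs_conical gs hf.symm).2
    rw [he1, mul_one] at he
    exact he ▸ hmc

lemma gs_delta_dvd_mul (gs : GarsideMonoid M) {a b : M} (haS : a ∈ gs.S) (h : LeftDvd gs.Δ b) :
    LeftDvd gs.Δ (a * b) := by
  obtain ⟨da, hda⟩ := haS
  obtain ⟨g, hg⟩ := (gs.balanced da).2 ⟨a, hda⟩
  obtain ⟨c, hc⟩ := h
  have key : a * gs.Δ = gs.Δ * g := by
    conv_lhs => rw [hg]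
    rw [← mul_assoc, ← hda]
  exact ⟨g * c, by rw [hc, ← mul_assoc, key, mul_assoc]⟩

lemma gs_atoms_prod_one (gs : GarsideMonoid M) {l : List M} (h : ∀ x ∈ l, IsAtomOf M x)
    (hp : l.prod = 1) : l = [] := by
  cases l with
  | nil => rfl
  | cons a t =>
    exact absurd (gs_conical gs (by simpa using hp)).1
      (h a (List.mem_cons_self)).1

lemma gs_main (gs : GarsideMonoid M) (hsp : gs.SpindleType) : ∀ (l₁ : List M) (b : M) (l₂ : List M),
    ¬ LeftDvd gs.Δ b → (∀ x ∈ l₁, IsAtomOf M x) → (∀ x ∈ l₂, IsAtomOf M x) →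
    l₁.prod = b → l₂.prod = b → l₁ = l₂ := by
  intro l₁
  induction l₁ with
  | nil =>
    intro b l₂ _ _ h2 hp1 hp2
    have hb1 : b = 1 := by simpa using hp1.symm
    exact (gs_atoms_prod_one gs h2 (hp2.trans hb1)).symm
  | cons a t ih =>
    intro b l₂ hb h1 h2 hp1 hp2
    cases l₂ with
    | nil =>
      have hb1 : b = 1 := by simpa using hp2.symm
      exact absurd (gs_atoms_prod_one gs h1 (hp1.trans hb1)) (by simp)
    | cons a' t₂ =>
      simp only [List.prod_cons] at hp1 hp2
      have hatom := h1 a (List.mem_cons_self)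
      have hatom' := h2 a' (List.mem_cons_self)
      have haa' : a = a' := by
        by_contra hne
        exact hb (gs_key gs hsp hatom hatom' hne ⟨t.prod, hp1.symm⟩
          ⟨t₂.prod, hp2.symm⟩)
      subst haa'
      have hpp : t.prod = t₂.prod := gs_lcancel gs (hp1.trans hp2.symm)
      have hb' : ¬ LeftDvd gs.Δ t.prod := by
        intro h
        exact hb (hp1 ▸ gs_delta_dvd_mul gs (gs_atom_mem_S gs hatom) h)
      have := ih t.prod t₂ hb'
        (fun x hx => h1 x (List.mem_cons_of_mem _ hx))
        (fun x hx => h2 x (List.mem_cons_of_mem _ hx)) rfl hpp.symm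
      rw [this]

end GarsideAux

/-- In a Garside monoid of spindle type, a positive element not left-divisible
    by Δ has exactly one representing word over the atoms. -/
theorem stmt_5 {M : Type*} [Monoid M] (gs : GarsideMonoid M)
    (hsp : gs.SpindleType) (b : M) (hb : ¬ LeftDvd gs.Δ b) :
    ∀ l₁ l₂ : List M, (∀ x ∈ l₁, IsAtomOf M x) → (∀ x ∈ l₂, IsAtomOf M x) →
      l₁.prod = b → l₂.prod = b → l₁ = l₂ := by
  intro l₁ l₂ h1 h2 hp1 hp2
  exact gs_main gs hsp l₁ b l₂ hb h1 h2 hp1 hp2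
end

section
/- In a Garside monoid of spindle type, if Δ^q left-divides b for some q ≥ 0, then every word w over the atoms representing b decomposes as w ≡ u₁D₁u₂D₂⋯uₘDₘuₘ₊₁ where each Dᵢ is a word representing Δ^{qᵢ} and q₁+⋯+qₘ = q. -/
namespace GarsideDev

variable {M : Type*} [Monoid M]

theorem ldvd_refl (a : M) : LeftDvd a a := ⟨1, (mul_one a).symm⟩

theorem ldvd_one_left (a : M) : LeftDvd 1 a := ⟨a, (one_mul a).symm⟩

theorem ldvd_trans {a b c : M} (h1 : LeftDvd a b) (h2 : LeftDvd b c) : LeftDvd a c := by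
  obtain ⟨u, rfl⟩ := h1; obtain ⟨v, rfl⟩ := h2; exact ⟨u * v, mul_assoc a u v⟩

theorem ldvd_mul (a b : M) : LeftDvd a (a * b) := ⟨b, rfl⟩

theorem rdvd_refl (a : M) : RightDvd' a a := ⟨1, (one_mul a).symm⟩

theorem rdvd_trans {a b c : M} (h1 : RightDvd' a b) (h2 : RightDvd' b c) : RightDvd' a c := by
  obtain ⟨u, rfl⟩ := h1; obtain ⟨v, rfl⟩ := h2; exact ⟨v * u, (mul_assoc v u a).symm⟩

theorem rdvd_one_left (a : M) : RightDvd' 1 a := ⟨a, (mul_one a).symm⟩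

theorem mul_left_cancel' (gs : GarsideMonoid M) {a b c : M} (h : a * b = a * c) : b = c :=
  gs.cancel a b c 1 (by simpa using h)

theorem mul_right_cancel' (gs : GarsideMonoid M) {a b c : M} (h : b * a = c * a) : b = c :=
  gs.cancel 1 b c a (by simpa using h)

/-- no nontrivial units -/
theorem unit_eq_one (gs : GarsideMonoid M) {a b : M} (h : a * b = 1) : a = 1 ∧ b = 1 := by
  by_cases ha : a = 1
  · subst ha; rw [one_mul] at h; exact ⟨rfl, h⟩
  by_cases hb : b = 1
  · subst hb; rw [mul_one] at h; exact ⟨h, rfl⟩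
  exfalso
  obtain ⟨n, hn⟩ := gs.noeth 1
  have key : ∀ k : ℕ, ∃ l : List M, (∀ x ∈ l, x ≠ 1) ∧ l.prod = 1 ∧ l.length = 2 * k := by
    intro k
    induction k with
    | zero => exact ⟨[], by simp⟩
    | succ k ih =>
        obtain ⟨l, h1, h2, h3⟩ := ih
        refine ⟨a :: b :: l, ?_, ?_, ?_⟩
        · intro x hx
          rcases List.mem_cons.1 hx with rfl | hx
          · exact ha
          rcases List.mem_cons.1 hx with rfl | hx
          · exact hb
          · exact h1 x hx
        · simp [h2, ← mul_assoc, h]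
        · simp [h3]; omega
  obtain ⟨l, h1, h2, h3⟩ := key (n + 1)
  have := hn l h1 h2
  omega

theorem eq_one_of_ldvd_one (gs : GarsideMonoid M) {a : M} (h : LeftDvd a 1) : a = 1 := by
  obtain ⟨c, hc⟩ := h; exact (unit_eq_one gs hc.symm).1

theorem eq_one_of_rdvd_one (gs : GarsideMonoid M) {a : M} (h : RightDvd' a 1) : a = 1 := by
  obtain ⟨c, hc⟩ := h; exact (unit_eq_one gs hc.symm).2

theorem ldvd_antisymm (gs : GarsideMonoid M) {a b : M} (h1 : LeftDvd a b) (h2 : LeftDvd b a) :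
    a = b := by
  obtain ⟨u, hu⟩ := h1; obtain ⟨v, hv⟩ := h2
  rw [hu, mul_assoc] at hv
  have huv : u * v = 1 := (mul_left_cancel' gs (by rw [← hv, mul_one])).symm
  have := (unit_eq_one gs huv).1
  rw [hu, this, mul_one]

theorem ldvd_cancel (gs : GarsideMonoid M) {a b c : M} (h : LeftDvd (a * b) (a * c)) :
    LeftDvd b c := by
  obtain ⟨u, hu⟩ := h
  exact ⟨u, mul_left_cancel' gs (by rw [hu, mul_assoc])⟩

theorem ldvd_mul_left (a : M) {b c : M} (h : LeftDvd b c) : LeftDvd (a * b) (a * c) := by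
  obtain ⟨u, rfl⟩ := h; exact ⟨u, (mul_assoc a b u).symm⟩

end GarsideDev
namespace GarsideDev

variable {M : Type*} [Monoid M]

open scoped Classical

/-- right complement: a * psi a = Δ for simple a -/
noncomputable def psi (gs : GarsideMonoid M) (a : M) : M :=
  if h : LeftDvd a gs.Δ then h.choose else 1

theorem psi_spec (gs : GarsideMonoid M) {a : M} (h : LeftDvd a gs.Δ) :
    a * psi gs a = gs.Δ := by
  rw [psi, dif_pos h]; exact h.choose_spec.symm

theorem psi_unique (gs : GarsideMonoid M) {a c : M} (h : a * c = gs.Δ) : c = psi gs a := by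
  have ha : LeftDvd a gs.Δ := ⟨c, h.symm⟩
  exact mul_left_cancel' gs (by rw [h, psi_spec gs ha])

theorem psi_simple (gs : GarsideMonoid M) {a : M} (h : LeftDvd a gs.Δ) :
    LeftDvd (psi gs a) gs.Δ :=
  (gs.balanced _).mpr ⟨a, (psi_spec gs h).symm⟩

theorem psi_eq_one_iff (gs : GarsideMonoid M) {a : M} (h : LeftDvd a gs.Δ) :
    psi gs a = 1 ↔ a = gs.Δ := by
  constructor
  · intro h1
    have := psi_spec gs h; rw [h1, mul_one] at this; exact this
  · intro h1
    subst h1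
    exact (psi_unique gs (mul_one gs.Δ)).symm

/-- left complement: chi a * a = Δ for a right-dividing Δ -/
noncomputable def chi (gs : GarsideMonoid M) (a : M) : M :=
  if h : RightDvd' a gs.Δ then h.choose else 1

theorem chi_spec (gs : GarsideMonoid M) {a : M} (h : RightDvd' a gs.Δ) :
    chi gs a * a = gs.Δ := by
  rw [chi, dif_pos h]; exact h.choose_spec.symm

theorem psi_chi (gs : GarsideMonoid M) {a : M} (h : RightDvd' a gs.Δ) :
    psi gs (chi gs a) = a :=
  (psi_unique gs (chi_spec gs h)).symm

theorem chi_ldvd (gs : GarsideMonoid M) {a : M} (h : RightDvd' a gs.Δ) :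
    LeftDvd (chi gs a) gs.Δ := ⟨a, (chi_spec gs h).symm⟩

/-- any factor of a simple is simple -/
theorem simple_of_ldvd (gs : GarsideMonoid M) {a b : M} (hb : LeftDvd b gs.Δ)
    (h : LeftDvd a b) : LeftDvd a gs.Δ := ldvd_trans h hb

theorem simple_rfactor (gs : GarsideMonoid M) {a c x : M} (ha : LeftDvd a gs.Δ)
    (h : a = c * x) : LeftDvd x gs.Δ := by
  have hc : LeftDvd c gs.Δ := ldvd_trans ⟨x, h⟩ ha
  -- Δ = c * psi c  and Δ = a * psi a = c * x * psi a
  have h1 : c * (x * psi gs a) = gs.Δ := by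
    rw [← mul_assoc, ← h, psi_spec gs ha]
  have h2 : x * psi gs a = psi gs c := psi_unique gs h1
  exact ldvd_trans ⟨psi gs a, h2.symm⟩ (psi_simple gs hc)

/-- atoms are simple -/
theorem atom_simple (gs : GarsideMonoid M) {a : M} (h : IsAtomOf M a) : LeftDvd a gs.Δ := by
  have hmem : a ∈ Submonoid.closure {x : M | LeftDvd x gs.Δ} := by rw [gs.genS]; trivial
  revert h
  refine Submonoid.closure_induction (motive := fun x _ => IsAtomOf M x → LeftDvd x gs.Δ)
    ?_ ?_ ?_ hmem
  · intro x hx _; exact hx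
  · intro hx; exact absurd rfl hx.1
  · intro x y _ _ ihx ihy hxy
    rcases hxy.2 x y rfl with rfl | rfl
    · rw [one_mul] at hxy ⊢; exact ihy hxy
    · rw [mul_one] at hxy ⊢; exact ihx hxy

end GarsideDev
namespace GarsideDev

variable {M : Type*} [Monoid M]

theorem exists_phi (gs : GarsideMonoid M) (a : M) : ∃ c, a * gs.Δ = gs.Δ * c := by
  have hmem : a ∈ Submonoid.closure {x : M | LeftDvd x gs.Δ} := by rw [gs.genS]; trivial
  refine Submonoid.closure_induction (motive := fun x _ => ∃ c, x * gs.Δ = gs.Δ * c) ?_ ?_ ?_ hmem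
  · intro s hs
    refine ⟨psi gs (psi gs s), ?_⟩
    have h1 : s * psi gs s = gs.Δ := psi_spec gs hs
    have h2 : psi gs s * psi gs (psi gs s) = gs.Δ := psi_spec gs (psi_simple gs hs)
    calc s * gs.Δ = s * (psi gs s * psi gs (psi gs s)) := by rw [h2]
      _ = (s * psi gs s) * psi gs (psi gs s) := (mul_assoc _ _ _).symm
      _ = gs.Δ * psi gs (psi gs s) := by rw [h1]
  · exact ⟨1, by rw [one_mul, mul_one]⟩
  · rintro x y _ _ ⟨cx, hcx⟩ ⟨cy, hcy⟩
    exact ⟨cx * cy, by rw [mul_assoc, hcy, ← mul_assoc, hcx, mul_assoc]⟩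

theorem exists_psiM (gs : GarsideMonoid M) (a : M) : ∃ c, gs.Δ * a = c * gs.Δ := by
  have hmem : a ∈ Submonoid.closure {x : M | LeftDvd x gs.Δ} := by rw [gs.genS]; trivial
  refine Submonoid.closure_induction (motive := fun x _ => ∃ c, gs.Δ * x = c * gs.Δ) ?_ ?_ ?_ hmem
  · intro s hs
    have hs' : RightDvd' s gs.Δ := (gs.balanced s).mp hs
    have hcs : LeftDvd (chi gs s) gs.Δ := chi_ldvd gs hs'
    have hcs' : RightDvd' (chi gs s) gs.Δ := (gs.balanced _).mp hcs
    refine ⟨chi gs (chi gs s), ?_⟩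
    have h1 : chi gs s * s = gs.Δ := chi_spec gs hs'
    have h2 : chi gs (chi gs s) * chi gs s = gs.Δ := chi_spec gs hcs'
    calc gs.Δ * s = (chi gs (chi gs s) * chi gs s) * s := by rw [h2]
      _ = chi gs (chi gs s) * (chi gs s * s) := mul_assoc _ _ _
      _ = chi gs (chi gs s) * gs.Δ := by rw [h1]
  · exact ⟨1, by rw [one_mul, mul_one]⟩
  · rintro x y _ _ ⟨cx, hcx⟩ ⟨cy, hcy⟩
    exact ⟨cx * cy, by rw [← mul_assoc, hcx, mul_assoc, hcy, ← mul_assoc]⟩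

/-- the Garside automorphism: a * Δ = Δ * Phi a -/
noncomputable def Phi (gs : GarsideMonoid M) : M →* M where
  toFun a := (exists_phi gs a).choose
  map_one' := by
    have h := (exists_phi gs (1 : M)).choose_spec
    exact mul_left_cancel' gs (show gs.Δ * _ = gs.Δ * 1 by rw [mul_one, ← h, one_mul])
  map_mul' a b := by
    have ha := (exists_phi gs a).choose_spec
    have hb := (exists_phi gs b).choose_spec
    have hab := (exists_phi gs (a * b)).choose_spec
    apply mul_left_cancel' gs (a := gs.Δ)
    rw [← hab, mul_assoc]
    generalize (exists_phi gs a).choose = pa at ha ⊢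
    generalize (exists_phi gs b).choose = pb at hb ⊢
    rw [hb, ← mul_assoc, ha, mul_assoc]

theorem Phi_spec (gs : GarsideMonoid M) (a : M) : a * gs.Δ = gs.Δ * Phi gs a :=
  (exists_phi gs a).choose_spec

theorem Phi_unique (gs : GarsideMonoid M) {a c : M} (h : a * gs.Δ = gs.Δ * c) :
    c = Phi gs a :=
  mul_left_cancel' gs (by rw [← h, Phi_spec])

noncomputable def PsiM (gs : GarsideMonoid M) : M → M := fun a => (exists_psiM gs a).choose

theorem PsiM_spec (gs : GarsideMonoid M) (a : M) : gs.Δ * a = PsiM gs a * gs.Δ :=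
  (exists_psiM gs a).choose_spec

theorem Phi_PsiM (gs : GarsideMonoid M) (a : M) : Phi gs (PsiM gs a) = a := by
  have h1 := PsiM_spec gs a
  have h2 := Phi_spec gs (PsiM gs a)
  apply mul_left_cancel' gs (a := gs.Δ)
  rw [← h2, ← h1]

theorem PsiM_Phi (gs : GarsideMonoid M) (a : M) : PsiM gs (Phi gs a) = a := by
  have h1 := PsiM_spec gs (Phi gs a)
  have h2 := Phi_spec gs a
  apply mul_right_cancel' gs (a := gs.Δ)
  rw [← h1, ← h2]

theorem Phi_inj (gs : GarsideMonoid M) {a b : M} (h : Phi gs a = Phi gs b) : a = b := by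
  rw [← PsiM_Phi gs a, h, PsiM_Phi]

theorem Phi_delta (gs : GarsideMonoid M) : Phi gs gs.Δ = gs.Δ := (Phi_unique gs rfl).symm

theorem Phi_ldvd (gs : GarsideMonoid M) {a b : M} (h : LeftDvd a b) :
    LeftDvd (Phi gs a) (Phi gs b) := by
  obtain ⟨c, rfl⟩ := h; exact ⟨Phi gs c, by rw [map_mul]⟩

theorem PsiM_ldvd (gs : GarsideMonoid M) {a b : M} (h : LeftDvd a b) :
    LeftDvd (PsiM gs a) (PsiM gs b) := by
  obtain ⟨c, rfl⟩ := h
  refine ⟨PsiM gs c, Phi_inj gs ?_⟩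
  rw [map_mul, Phi_PsiM, Phi_PsiM, Phi_PsiM]

theorem Phi_rdvd (gs : GarsideMonoid M) {a b : M} (h : RightDvd' a b) :
    RightDvd' (Phi gs a) (Phi gs b) := by
  obtain ⟨c, rfl⟩ := h; exact ⟨Phi gs c, by rw [map_mul]⟩

theorem Phi_simple (gs : GarsideMonoid M) {a : M} (h : LeftDvd a gs.Δ) :
    LeftDvd (Phi gs a) gs.Δ := by
  have := Phi_ldvd gs h
  rwa [Phi_delta] at this

theorem Phi_eq_one_iff (gs : GarsideMonoid M) {a : M} : Phi gs a = 1 ↔ a = 1 := by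
  constructor
  · intro h; exact Phi_inj gs (by rw [h, map_one])
  · intro h; rw [h, map_one]

theorem Phi_eq_delta_iff (gs : GarsideMonoid M) {a : M} : Phi gs a = gs.Δ ↔ a = gs.Δ := by
  constructor
  · intro h; exact Phi_inj gs (by rw [h, Phi_delta])
  · intro h; rw [h, Phi_delta]

theorem Phi_psi_simple (gs : GarsideMonoid M) {s : M} (hs : LeftDvd s gs.Δ) :
    Phi gs s = psi gs (psi gs s) := by
  symm; apply Phi_unique
  have h1 : s * psi gs s = gs.Δ := psi_spec gs hs
  have h2 : psi gs s * psi gs (psi gs s) = gs.Δ := psi_spec gs (psi_simple gs hs)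
  calc s * gs.Δ = s * (psi gs s * psi gs (psi gs s)) := by rw [h2]
    _ = (s * psi gs s) * psi gs (psi gs s) := (mul_assoc _ _ _).symm
    _ = gs.Δ * psi gs (psi gs s) := by rw [h1]

theorem psi_Phi_comm (gs : GarsideMonoid M) {s : M} (hs : LeftDvd s gs.Δ) :
    psi gs (Phi gs s) = Phi gs (psi gs s) := by
  apply mul_left_cancel' gs (a := Phi gs s)
  rw [psi_spec gs (Phi_simple gs hs)]
  have : Phi gs s * Phi gs (psi gs s) = Phi gs (s * psi gs s) := (map_mul _ _ _).symm
  rw [this, psi_spec gs hs, Phi_delta]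

/-- a * Δ^n = Δ^n * Phi^n(a) is not needed in iterate form; but Δ^k ⪯ Δ^k * z etc. -/
theorem delta_ldvd_mul_delta (gs : GarsideMonoid M) (a b : M) :
    LeftDvd gs.Δ (a * gs.Δ * b) := by
  rw [Phi_spec gs a]
  exact ⟨Phi gs a * b, by rw [mul_assoc]⟩

theorem delta_ldvd_of_factor (gs : GarsideMonoid M) {a b t : M}
    (h : LeftDvd gs.Δ b) (ht : t = a * b) : LeftDvd gs.Δ t := by
  obtain ⟨c, rfl⟩ := h
  subst ht
  rw [← mul_assoc]
  exact delta_ldvd_mul_delta gs a c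

end GarsideDev
namespace GarsideDev

variable {M : Type*} [Monoid M]

open scoped Classical

/-- common right divisors of simple elements are simple -/
theorem simple_of_common_rdvd (gs : GarsideMonoid M) {a d : M} (ha : LeftDvd a gs.Δ)
    (h : RightDvd' d a) : LeftDvd d gs.Δ := by
  obtain ⟨c, hc⟩ := h
  exact simple_rfactor gs ha hc

theorem exists_rightGcd (gs : GarsideMonoid M) {a b : M} (ha : LeftDvd a gs.Δ)
    (hb : LeftDvd b gs.Δ) : ∃ g, IsRightGcd a b g := by
  have key : ∀ l : List M, ∃ g, (RightDvd' g a ∧ RightDvd' g b) ∧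
      (∀ d ∈ l, RightDvd' d a → RightDvd' d b → RightDvd' d g) := by
    intro l
    induction l with
    | nil => exact ⟨1, ⟨rdvd_one_left a, rdvd_one_left b⟩, by simp⟩
    | cons d l ih =>
        obtain ⟨g, hg, hall⟩ := ih
        by_cases hd : RightDvd' d a ∧ RightDvd' d b
        · obtain ⟨m, hm⟩ := gs.llcm d g
          refine ⟨m, ⟨hm.2.2 a hd.1 hg.1, hm.2.2 b hd.2 hg.2⟩, ?_⟩
          intro e he h1 h2
          rcases List.mem_cons.1 he with rfl | he
          · exact hm.1
          · exact rdvd_trans (hall e he h1 h2) hm.2.1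
        · refine ⟨g, hg, ?_⟩
          intro e he h1 h2
          rcases List.mem_cons.1 he with rfl | he
          · exact absurd ⟨h1, h2⟩ hd
          · exact hall e he h1 h2
  obtain ⟨g, hg, hall⟩ := key gs.finS.toFinset.toList
  refine ⟨g, hg.1, hg.2, ?_⟩
  intro d h1 h2
  refine hall d ?_ h1 h2
  rw [Finset.mem_toList, Set.Finite.mem_toFinset]
  exact simple_of_common_rdvd gs ha h1

theorem simple_of_common_ldvd (gs : GarsideMonoid M) {a d : M} (ha : LeftDvd a gs.Δ)
    (h : LeftDvd d a) : LeftDvd d gs.Δ := ldvd_trans h ha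

theorem exists_leftGcd (gs : GarsideMonoid M) {a b : M} (ha : LeftDvd a gs.Δ)
    (hb : LeftDvd b gs.Δ) : ∃ g, IsLeftGcd a b g := by
  have key : ∀ l : List M, ∃ g, (LeftDvd g a ∧ LeftDvd g b) ∧
      (∀ d ∈ l, LeftDvd d a → LeftDvd d b → LeftDvd d g) := by
    intro l
    induction l with
    | nil => exact ⟨1, ⟨ldvd_one_left a, ldvd_one_left b⟩, by simp⟩
    | cons d l ih =>
        obtain ⟨g, hg, hall⟩ := ih
        by_cases hd : LeftDvd d a ∧ LeftDvd d b
        · obtain ⟨m, hm⟩ := gs.rlcm d g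
          refine ⟨m, ⟨hm.2.2 a hd.1 hg.1, hm.2.2 b hd.2 hg.2⟩, ?_⟩
          intro e he h1 h2
          rcases List.mem_cons.1 he with rfl | he
          · exact hm.1
          · exact ldvd_trans (hall e he h1 h2) hm.2.1
        · refine ⟨g, hg, ?_⟩
          intro e he h1 h2
          rcases List.mem_cons.1 he with rfl | he
          · exact absurd ⟨h1, h2⟩ hd
          · exact hall e he h1 h2
  obtain ⟨g, hg, hall⟩ := key gs.finS.toFinset.toList
  refine ⟨g, hg.1, hg.2, ?_⟩
  intro d h1 h2
  refine hall d ?_ h1 h2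
  rw [Finset.mem_toList, Set.Finite.mem_toFinset]
  exact simple_of_common_ldvd gs ha h1

/-- left-coprime: no common left divisor except 1 -/
def Cop {M : Type*} [Monoid M] (a b : M) : Prop := ∀ d, LeftDvd d a → LeftDvd d b → d = 1

theorem trichotomy (gs : GarsideMonoid M) (hsp : gs.SpindleType) {a b : M}
    (ha : LeftDvd a gs.Δ) (hb : LeftDvd b gs.Δ) :
    LeftDvd a b ∨ LeftDvd b a ∨ Cop a b := by
  obtain ⟨g, hg⟩ := exists_leftGcd gs ha hb
  rcases hsp.1 a ha b hb g hg with rfl | rfl | rfl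
  · exact Or.inl hg.2.1
  · exact Or.inr (Or.inl hg.1)
  · refine Or.inr (Or.inr ?_)
    intro d h1 h2
    exact eq_one_of_ldvd_one gs (hg.2.2 d h1 h2)

/-- KEY: the right lcm of two coprime nontrivial simples is Δ. -/
theorem bsf (gs : GarsideMonoid M) (hsp : gs.SpindleType) {y r m : M}
    (hy : LeftDvd y gs.Δ) (hr : LeftDvd r gs.Δ) (hy1 : y ≠ 1) (hr1 : r ≠ 1)
    (hcop : Cop y r) (h1 : LeftDvd y m) (h2 : LeftDvd r m) : LeftDvd gs.Δ m := by
  obtain ⟨m₀, hm₀⟩ := gs.rlcm y r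
  have hm₀m : LeftDvd m₀ m := hm₀.2.2 m h1 h2
  have hm₀Δ : LeftDvd m₀ gs.Δ := hm₀.2.2 gs.Δ hy hr
  by_cases hEq : m₀ = gs.Δ
  · rw [← hEq]; exact hm₀m
  exfalso
  obtain ⟨n, hn⟩ := hm₀Δ
  have hn1 : n ≠ 1 := by rintro rfl; rw [mul_one] at hn; exact hEq hn.symm
  obtain ⟨av, hav⟩ := hm₀.1
  obtain ⟨bv, hbv⟩ := hm₀.2.1
  -- psi y = av * n , psi r = bv * n
  have hpy : psi gs y = av * n := by
    apply mul_left_cancel' gs (a := y)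
    rw [psi_spec gs hy, hn, hav, mul_assoc]
  have hpr : psi gs r = bv * n := by
    apply mul_left_cancel' gs (a := r)
    rw [psi_spec gs hr, hn, hbv, mul_assoc]
  obtain ⟨g, hg⟩ := exists_rightGcd gs (psi_simple gs hy) (psi_simple gs hr)
  have hng : RightDvd' n g := hg.2.2 n ⟨av, hpy⟩ ⟨bv, hpr⟩
  have hgne : g ≠ 1 := by
    rintro rfl
    exact hn1 (eq_one_of_rdvd_one gs hng)
  rcases hsp.2 (psi gs y) (psi_simple gs hy) (psi gs r) (psi_simple gs hr) g hg
    with hgy | hgr | hgone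
  · -- g = psi y, so psi y right-divides psi r, giving r ⪯ y
    subst hgy
    obtain ⟨c, hc⟩ := hg.2.1
    have hyc : r * c = y := by
      apply mul_right_cancel' gs (a := psi gs y)
      rw [mul_assoc, ← hc, psi_spec gs hr, psi_spec gs hy]
    exact hr1 (hcop r ⟨c, hyc.symm⟩ (ldvd_refl r))
  · subst hgr
    obtain ⟨c, hc⟩ := hg.1
    have hyc : y * c = r := by
      apply mul_right_cancel' gs (a := psi gs r)
      rw [mul_assoc, ← hc, psi_spec gs hy, psi_spec gs hr]
    exact hy1 (hcop y (ldvd_refl y) ⟨c, hyc.symm⟩)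
  · exact hgne hgone

end GarsideDev
namespace GarsideDev

variable {M : Type*} [Monoid M]

/-- if r = y * c then psi r left-divides psi c -/
theorem psi_suffix (gs : GarsideMonoid M) {r y c : M} (hr : LeftDvd r gs.Δ)
    (h : r = y * c) : LeftDvd (psi gs r) (psi gs c) := by
  have hy : LeftDvd y gs.Δ := ldvd_trans ⟨c, h⟩ hr
  have hc : LeftDvd c gs.Δ := simple_rfactor gs hr h
  -- psi y = c * psi r
  have h1 : psi gs y = c * psi gs r := by
    apply mul_left_cancel' gs (a := y)
    rw [psi_spec gs hy, ← mul_assoc, ← h, psi_spec gs hr]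
  -- Δ = psi y * z  since psi y simple; Δ = c * psi c
  obtain ⟨z, hz⟩ := psi_simple gs hy
  refine ⟨z, ?_⟩
  apply mul_left_cancel' gs (a := c)
  rw [psi_spec gs hc, ← mul_assoc, ← h1, ← hz]

theorem lemW (gs : GarsideMonoid M) (hsp : gs.SpindleType) :
    ∀ (L : List M) (r s m : M),
    (∀ a ∈ r :: L, LeftDvd a gs.Δ ∧ a ≠ 1 ∧ a ≠ gs.Δ) →
    List.Chain (fun a b => Cop (psi gs a) b) r L →
    LeftDvd s gs.Δ → s ≠ 1 → Cop s r →
    LeftDvd s m → LeftDvd ((r :: L).prod) m →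
    LeftDvd ((r :: L).prod * psi gs (L.getLastD r)) m := by
  intro L
  induction L with
  | nil =>
      intro r s m hent _ hs hs1 hcop hsm hrm
      obtain ⟨hrS, hr1, _⟩ := hent r (by simp)
      have hΔm : LeftDvd gs.Δ m :=
        bsf gs hsp hs hrS hs1 hr1 hcop hsm (by simpa using hrm)
      obtain ⟨z, hz⟩ := hΔm
      refine ⟨z, ?_⟩
      simp only [List.prod_cons, List.prod_nil, List.getLastD_nil, mul_one]
      rw [hz, ← psi_spec gs hrS, mul_assoc]
  | cons r₂ L₂ ih =>
      intro r s m hent hchain hs hs1 hcop hsm hrm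
      obtain ⟨hrS, hr1, hrΔ⟩ := hent r (by simp)
      have hrm' : LeftDvd r m := ldvd_trans ⟨(r₂ :: L₂).prod, by simp [List.prod_cons]⟩ hrm
      have hΔm : LeftDvd gs.Δ m := bsf gs hsp hs hrS hs1 hr1 hcop hsm hrm'
      obtain ⟨z, hz⟩ := hΔm
      set m₁ := psi gs r * z with hm₁
      have hmrm₁ : m = r * m₁ := by rw [hm₁, ← mul_assoc, psi_spec gs hrS, hz]
      obtain ⟨hP, hchain'⟩ := List.chain_cons.1 hchain
      have hrec : LeftDvd ((r₂ :: L₂).prod * psi gs (L₂.getLastD r₂)) m₁ := by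
        refine ih r₂ (psi gs r) m₁ ?_ hchain' (psi_simple gs hrS) ?_ hP ⟨z, rfl⟩ ?_
        · intro a ha; exact hent a (List.mem_cons_of_mem r ha)
        · intro hpsi1; exact hrΔ ((psi_eq_one_iff gs hrS).1 hpsi1)
        · apply ldvd_cancel gs (a := r)
          rw [← hmrm₁, ← List.prod_cons]
          exact hrm
      obtain ⟨w, hw⟩ := hrec
      refine ⟨w, ?_⟩
      rw [List.prod_cons, List.getLastD_cons, mul_assoc, mul_assoc, ← mul_assoc ((r₂ :: L₂).prod),
        ← hw, ← hmrm₁]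

end GarsideDev
namespace GarsideDev

variable {M : Type*} [Monoid M]

theorem PsiM_mul (gs : GarsideMonoid M) (a b : M) :
    PsiM gs (a * b) = PsiM gs a * PsiM gs b := by
  apply Phi_inj gs
  rw [Phi_PsiM, map_mul, Phi_PsiM, Phi_PsiM]

theorem PsiM_one (gs : GarsideMonoid M) : PsiM gs (1 : M) = 1 := by
  apply Phi_inj gs; rw [Phi_PsiM, map_one]

theorem getLastD_map_cons {α β : Type*} (f : α → β) :
    ∀ (L : List α) (r : α) (d : β), (List.map f (r :: L)).getLastD d = f (L.getLastD r) := by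
  intro L
  induction L with
  | nil => intro r d; simp
  | cons r₂ L₂ ih =>
      intro r d
      rw [List.map_cons, List.getLastD_cons, List.getLastD_cons]
      exact ih r₂ (f r)

theorem getLastD_mem_cons' {α : Type*} : ∀ (L : List α) (r : α), L.getLastD r ∈ r :: L := by
  intro L
  induction L with
  | nil => intro r; simp
  | cons r₂ L₂ ih =>
      intro r
      rw [List.getLastD_cons]
      exact List.mem_cons_of_mem r (ih r₂)

theorem chain_push (gs : GarsideMonoid M) :
    ∀ (L : List M) (r : M), (∀ a ∈ r :: L, LeftDvd a gs.Δ) →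
    List.Chain (fun a b => Cop (psi gs a) b) r L →
    List.Chain (fun a b => Cop (psi gs a) b) (Phi gs r) (List.map (Phi gs) L) := by
  intro L
  induction L with
  | nil => intro r _ _; exact List.Chain.nil
  | cons r₂ L₂ ih =>
      intro r hS hchain
      obtain ⟨hP, hchain'⟩ := List.chain_cons.1 hchain
      rw [List.map_cons, List.Chain, List.chain_cons]
      constructor
      · -- Cop (psi (Phi r)) (Phi r₂)
        rw [psi_Phi_comm gs (hS r (by simp))]
        intro d hd1 hd2
        have h1 : LeftDvd (PsiM gs d) (psi gs r) := by
          have := PsiM_ldvd gs hd1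
          rwa [PsiM_Phi] at this
        have h2 : LeftDvd (PsiM gs d) r₂ := by
          have := PsiM_ldvd gs hd2
          rwa [PsiM_Phi] at this
        have := hP (PsiM gs d) h1 h2
        rw [← Phi_PsiM gs d, this, map_one]
      · exact ih r₂ (fun a ha => hS a (List.mem_cons_of_mem r ha)) hchain'

theorem cop_phi (gs : GarsideMonoid M) {a b : M} (h : Cop a b) :
    Cop (Phi gs a) (Phi gs b) := by
  intro d hd1 hd2
  have h1 := PsiM_ldvd gs hd1
  have h2 := PsiM_ldvd gs hd2
  rw [PsiM_Phi] at h1 h2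
  have := h (PsiM gs d) h1 h2
  rw [← Phi_PsiM gs d, this, map_one]

end GarsideDev
namespace GarsideDev

variable {M : Type*} [Monoid M]

theorem matcher (gs : GarsideMonoid M) (hsp : gs.SpindleType) {x : M}
    (hxS : LeftDvd x gs.Δ) (q' : ℕ) :
    ∀ (v m₀ : List M) (r₁ : M) (L : List M) (j : ℕ) (B : M),
    (∀ a ∈ v, IsAtomOf M a) →
    (∀ a ∈ r₁ :: L, LeftDvd a gs.Δ ∧ a ≠ 1 ∧ a ≠ gs.Δ) →
    List.Chain (fun a b => Cop (psi gs a) b) r₁ L →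
    ¬ LeftDvd gs.Δ ((r₁ :: L).prod) →
    j < q' →
    (x :: m₀).prod * (r₁ :: L).prod = gs.Δ ^ (q' - j) →
    LeftDvd ((r₁ :: L).prod * gs.Δ ^ j) v.prod →
    RightDvd' (L.getLastD r₁) B →
    psi gs x * gs.Δ ^ (q' - 1 - j) = gs.Δ ^ (q' - 1 - j) * B →
    (∃ w rest k, v = w ++ rest ∧ (x :: (m₀ ++ w)).prod = gs.Δ ^ k ∧ 1 ≤ k ∧ k ≤ q' ∧
      LeftDvd (gs.Δ ^ (q' - k)) rest.prod)
    ∨ LeftDvd (gs.Δ ^ q') (m₀.prod * v.prod) := by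
  intro v
  induction v with
  | nil =>
      intro m₀ r₁ L j B _ hstack _ _ _ _ H1 _ _
      exfalso
      obtain ⟨z, hz⟩ := H1
      rw [List.prod_nil] at hz
      rw [List.prod_cons, mul_assoc, mul_assoc] at hz
      exact (hstack r₁ (by simp)).2.1 (unit_eq_one gs hz.symm).1
  | cons y v' ih =>
      intro m₀ r₁ L j B hv hstack hchain hnoΔ hj H2 H1 hbot HB2
      have hyA : IsAtomOf M y := hv y (by simp)
      have hyS : LeftDvd y gs.Δ := atom_simple gs hyA
      have hy1 : y ≠ 1 := hyA.1
      obtain ⟨hr₁S, hr₁1, hr₁Δ⟩ := hstack r₁ (by simp)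
      have hv' : ∀ a ∈ v', IsAtomOf M a := fun a ha => hv a (List.mem_cons_of_mem y ha)
      have hvpr : (y :: v').prod = y * v'.prod := List.prod_cons
      -- dichotomy: y divides r₁, or y and r₁ are coprime
      have hyr : LeftDvd y r₁ ∨ Cop y r₁ := by
        rcases trichotomy gs hsp hyS hr₁S with h | h | h
        · exact Or.inl h
        · obtain ⟨c, hc⟩ := h
          rcases hyA.2 r₁ c hc with h1 | h1
          · exact absurd h1 hr₁1
          · exact Or.inl ⟨1, by rw [hc, h1]; simp⟩
        · exact Or.inr h
      rcases hyr with ⟨c, hc⟩ | hcop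
      · -- POP case : r₁ = y * c
        by_cases hc1 : c = 1
        · have hr₁y : r₁ = y := by rw [hc, hc1, mul_one]
          cases L with
          | nil =>
              -- COMPLETE: block is x :: m₀ ++ [y]
              left
              refine ⟨[y], v', q' - j, by simp, ?_, by omega, by omega, ?_⟩
              · rw [← H2]
                simp [List.prod_append, List.prod_cons, hr₁y, mul_assoc]
              · have hjj : q' - (q' - j) = j := by omega
                rw [hjj]
                apply ldvd_cancel gs (a := y)
                have h1 := H1
                rw [List.prod_cons, List.prod_nil, mul_one, hvpr, hr₁y] at h1
                exact h1
          | cons r₂ L₂ =>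
              -- drop the head of the stack
              have hrec := ih (m₀ ++ [y]) r₂ L₂ j B hv'
                (fun a ha => hstack a (List.mem_cons_of_mem r₁ ha))
                (List.chain_cons.1 hchain).2
                (fun h => hnoΔ (delta_ldvd_of_factor gs h List.prod_cons))
                hj
                (by rw [← H2]
                    simp [List.prod_append, List.prod_cons, hr₁y, mul_assoc])
                (by apply ldvd_cancel gs (a := y)
                    have h1 := H1
                    rw [hvpr] at h1
                    rw [← mul_assoc]
                    have he : y * (r₂ :: L₂).prod = (r₁ :: r₂ :: L₂).prod := by
                      rw [List.prod_cons (a := r₁), hr₁y]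
                    rw [he]
                    exact h1)
                (by rw [List.getLastD_cons] at hbot; exact hbot)
                HB2
              rcases hrec with ⟨w, rest, k, hsplit, hprodk, h1k, hkq, hdvd⟩ | hrc
              · left
                refine ⟨y :: w, rest, k, by rw [hsplit, List.cons_append], ?_, h1k, hkq, hdvd⟩
                rw [← hprodk, List.append_cons]
              · right
                rw [hvpr, ← mul_assoc]
                have hme : m₀.prod * y = (m₀ ++ [y]).prod := by simp
                rw [hme]
                exact hrc
        · -- partial pop: new head c
          have hcS : LeftDvd c gs.Δ := simple_rfactor gs hr₁S hc
          have hcΔ : c ≠ gs.Δ := by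
            rintro rfl
            obtain ⟨e, he⟩ := hr₁S
            have h1 : y * gs.Δ * e = gs.Δ := by rw [← hc]; exact he.symm
            rw [Phi_spec gs y] at h1
            have h2 : Phi gs y * e = 1 :=
              mul_left_cancel' gs (show gs.Δ * (Phi gs y * e) = gs.Δ * 1 by
                rw [mul_one, ← mul_assoc, h1])
            exact hy1 ((Phi_eq_one_iff gs).1 (unit_eq_one gs h2).1)
          have hnoΔ' : ¬ LeftDvd gs.Δ ((c :: L).prod) := by
            intro ⟨d, hd⟩
            apply hnoΔ
            refine delta_ldvd_of_factor gs (a := y) (b := (c :: L).prod) ⟨d, hd⟩ ?_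
            rw [List.prod_cons, List.prod_cons, ← mul_assoc, ← hc]
          have hchain' : List.Chain (fun a b => Cop (psi gs a) b) c L := by
            cases L with
            | nil => exact List.Chain.nil
            | cons r₂ L₂ =>
                obtain ⟨hP, hch2⟩ := List.chain_cons.1 hchain
                obtain ⟨hr₂S, hr₂1, _⟩ := hstack r₂ (by simp)
                rw [List.Chain, List.chain_cons]
                refine ⟨?_, hch2⟩
                rcases trichotomy gs hsp (psi_simple gs hcS) hr₂S with h | h | h
                · -- psi c ⪯ r₂ : contradiction with Δ-freeness
                  exfalso
                  obtain ⟨e, he⟩ := h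
                  apply hnoΔ'
                  refine ⟨e * L₂.prod, ?_⟩
                  calc (c :: r₂ :: L₂).prod = c * (r₂ * L₂.prod) := by
                        rw [List.prod_cons, List.prod_cons]
                    _ = (c * psi gs c) * (e * L₂.prod) := by rw [he]; simp [mul_assoc]
                    _ = gs.Δ * (e * L₂.prod) := by rw [psi_spec gs hcS]
                · -- r₂ ⪯ psi c : impossible (merge case)
                  exfalso
                  have hpsi : LeftDvd (psi gs r₁) (psi gs c) := psi_suffix gs hr₁S hc
                  have hΔpc : LeftDvd gs.Δ (psi gs c) := by
                    refine bsf gs hsp (psi_simple gs hr₁S) hr₂S ?_ hr₂1 hP hpsi h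
                    intro hone
                    exact hr₁Δ ((psi_eq_one_iff gs hr₁S).1 hone)
                  have hpcΔ : psi gs c = gs.Δ :=
                    (ldvd_antisymm gs hΔpc (psi_simple gs hcS)).symm
                  have h1 : c * gs.Δ = gs.Δ :=
                    calc c * gs.Δ = c * psi gs c := by rw [hpcΔ]
                      _ = gs.Δ := psi_spec gs hcS
                  rw [Phi_spec gs c] at h1
                  have h2 : Phi gs c = 1 :=
                    mul_left_cancel' gs (show gs.Δ * Phi gs c = gs.Δ * 1 by rw [mul_one, h1])
                  exact hc1 ((Phi_eq_one_iff gs).1 h2)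
                · exact h
          have hrec := ih (m₀ ++ [y]) c L j B hv'
            (by intro a ha
                rcases List.mem_cons.1 ha with rfl | ha
                · exact ⟨hcS, hc1, hcΔ⟩
                · exact hstack a (List.mem_cons_of_mem r₁ ha))
            hchain'
            hnoΔ'
            hj
            (by rw [← H2]
                simp [List.prod_append, List.prod_cons, List.prod_nil, hc, mul_assoc])
            (by apply ldvd_cancel gs (a := y)
                have h1 := H1
                rw [hvpr] at h1
                have he : y * ((c :: L).prod * gs.Δ ^ j) = (r₁ :: L).prod * gs.Δ ^ j := by
                  rw [List.prod_cons, List.prod_cons, hc]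
                  simp [mul_assoc]
                rw [he]
                exact h1)
            (by cases L with
                | nil =>
                    simp only [List.getLastD_nil] at hbot ⊢
                    exact rdvd_trans ⟨y, hc⟩ hbot
                | cons r₂ L₂ =>
                    rw [List.getLastD_cons] at hbot ⊢
                    exact hbot)
            HB2
          rcases hrec with ⟨w, rest, k, hsplit, hprodk, h1k, hkq, hdvd⟩ | hrc
          · left
            refine ⟨y :: w, rest, k, by rw [hsplit, List.cons_append], ?_, h1k, hkq, hdvd⟩
            rw [← hprodk, List.append_cons]
          · right
            rw [hvpr, ← mul_assoc]
            have hme : m₀.prod * y = (m₀ ++ [y]).prod := by simp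
            rw [hme]
            exact hrc
      · -- COPRIME case
        have hyΔ : y ≠ gs.Δ := by
          rintro rfl
          exact hr₁1 (hcop r₁ hr₁S (ldvd_refl r₁))
        have hpy1 : psi gs y ≠ 1 := fun h => hyΔ ((psi_eq_one_iff gs hyS).1 h)
        have hynott : ¬ LeftDvd y ((r₁ :: L).prod) := by
          intro hyt
          apply hnoΔ
          exact bsf gs hsp hyS hr₁S hy1 hr₁1 hcop hyt ⟨L.prod, List.prod_cons⟩
        cases j with
        | zero =>
            -- STUCK: recovery
            right
            have hbotmem := getLastD_mem_cons' L r₁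
            obtain ⟨hbotS, hbot1, hbotΔ⟩ := hstack (L.getLastD r₁) hbotmem
            have hW : LeftDvd ((r₁ :: L).prod * psi gs (L.getLastD r₁)) ((y :: v').prod) := by
              refine lemW gs hsp L r₁ y ((y :: v').prod) hstack hchain hyS hy1 hcop ?_ ?_
              · rw [hvpr]; exact ldvd_mul y v'.prod
              · have h1 := H1; rw [pow_zero, mul_one] at h1; exact h1
            have hq1 : q' - 0 = (q' - 1) + 1 := by omega
            have hmt : m₀.prod * (r₁ :: L).prod = psi gs x * gs.Δ ^ (q' - 1) := by
              apply mul_left_cancel' gs (a := x)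
              calc x * (m₀.prod * (r₁ :: L).prod)
                  = (x :: m₀).prod * (r₁ :: L).prod := by
                      simp [List.prod_cons, mul_assoc]
                _ = gs.Δ ^ (q' - 0) := H2
                _ = gs.Δ ^ ((q' - 1) + 1) := by rw [hq1]
                _ = gs.Δ * gs.Δ ^ (q' - 1) := by rw [pow_succ']
                _ = x * (psi gs x * gs.Δ ^ (q' - 1)) := by
                      rw [← mul_assoc, psi_spec gs hxS]
            have HB2' : psi gs x * gs.Δ ^ (q' - 1) = gs.Δ ^ (q' - 1) * B := by
              have h := HB2
              have he : q' - 1 - 0 = q' - 1 := by omega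
              rwa [he] at h
            obtain ⟨wB, hwB⟩ := hbot
            obtain ⟨z, hz⟩ := hW
            refine ⟨Phi gs wB * z, ?_⟩
            calc m₀.prod * (y :: v').prod
                = m₀.prod * ((r₁ :: L).prod * psi gs (L.getLastD r₁) * z) := by rw [hz]
              _ = (m₀.prod * (r₁ :: L).prod) * (psi gs (L.getLastD r₁) * z) := by
                    simp [mul_assoc]
              _ = psi gs x * gs.Δ ^ (q' - 1) * (psi gs (L.getLastD r₁) * z) := by rw [hmt]
              _ = gs.Δ ^ (q' - 1) * B * (psi gs (L.getLastD r₁) * z) := by rw [HB2']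
              _ = gs.Δ ^ (q' - 1) * (wB * (L.getLastD r₁ * psi gs (L.getLastD r₁))) * z := by
                    rw [hwB]; simp [mul_assoc]
              _ = gs.Δ ^ (q' - 1) * (wB * gs.Δ) * z := by rw [psi_spec gs hbotS]
              _ = gs.Δ ^ (q' - 1) * (gs.Δ * Phi gs wB) * z := by rw [Phi_spec gs wB]
              _ = (gs.Δ ^ (q' - 1) * gs.Δ) * (Phi gs wB * z) := by simp [mul_assoc]
              _ = gs.Δ ^ ((q' - 1) + 1) * (Phi gs wB * z) := by rw [pow_succ]
              _ = gs.Δ ^ q' * (Phi gs wB * z) := by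
                    have : (q' - 1) + 1 = q' := by omega
                    rw [this]
        | succ j₂ =>
            -- PUSH
            have hpyS := psi_simple gs hyS
            have hpyΔ : psi gs y ≠ gs.Δ := by
              intro h
              have h0 : y * gs.Δ = gs.Δ := by
                calc y * gs.Δ = y * psi gs y := by rw [h]
                  _ = gs.Δ := psi_spec gs hyS
              rw [Phi_spec gs y] at h0
              have h2 : Phi gs y = 1 :=
                mul_left_cancel' gs (h0.trans (mul_one gs.Δ).symm)
              exact hy1 ((Phi_eq_one_iff gs).1 h2)
            have hkey : y * (psi gs y * Phi gs ((r₁ :: L).prod)) =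
                (r₁ :: L).prod * gs.Δ := by
              rw [← mul_assoc, psi_spec gs hyS, ← Phi_spec gs]
            have hprodmap : (psi gs y :: (r₁ :: L).map (Phi gs)).prod =
                psi gs y * Phi gs ((r₁ :: L).prod) := by
              rw [List.prod_cons, ← map_list_prod (Phi gs)]
            have hnoΔ' : ¬ LeftDvd gs.Δ ((psi gs y :: (r₁ :: L).map (Phi gs)).prod) := by
              rw [hprodmap]
              intro ⟨d, hd⟩
              have h1 : gs.Δ * Phi gs ((r₁ :: L).prod) = gs.Δ * (Phi gs y * d) := by
                calc gs.Δ * Phi gs ((r₁ :: L).prod)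
                    = y * (psi gs y * Phi gs ((r₁ :: L).prod)) := by
                      rw [← mul_assoc, psi_spec gs hyS]
                  _ = y * (gs.Δ * d) := by rw [hd]
                  _ = (y * gs.Δ) * d := (mul_assoc _ _ _).symm
                  _ = (gs.Δ * Phi gs y) * d := by rw [Phi_spec gs y]
                  _ = gs.Δ * (Phi gs y * d) := mul_assoc _ _ _
              have h2 := mul_left_cancel' gs h1
              have h3 : (r₁ :: L).prod = y * PsiM gs d := by
                have h4 := congrArg (PsiM gs) h2
                rwa [PsiM_Phi, PsiM_mul, PsiM_Phi] at h4
              exact hynott ⟨PsiM gs d, h3⟩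
            have hrec := ih (m₀ ++ [y]) (psi gs y) ((r₁ :: L).map (Phi gs)) j₂ (Phi gs B) hv'
              (by intro a ha
                  rcases List.mem_cons.1 ha with rfl | ha
                  · exact ⟨hpyS, hpy1, hpyΔ⟩
                  · obtain ⟨b, hb, rfl⟩ := List.mem_map.1 ha
                    obtain ⟨h1, h2, h3⟩ := hstack b hb
                    exact ⟨Phi_simple gs h1, fun h => h2 ((Phi_eq_one_iff gs).1 h),
                      fun h => h3 ((Phi_eq_delta_iff gs).1 h)⟩)
              (by rw [List.map_cons, List.Chain, List.chain_cons]
                  constructor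
                  · rw [← Phi_psi_simple gs hyS]
                    exact cop_phi gs hcop
                  · exact chain_push gs L r₁ (fun a ha => (hstack a ha).1) hchain)
              hnoΔ'
              (by omega)
              (by rw [hprodmap]
                  calc (x :: (m₀ ++ [y])).prod * (psi gs y * Phi gs ((r₁ :: L).prod))
                      = (x :: m₀).prod * (y * (psi gs y * Phi gs ((r₁ :: L).prod))) := by
                        simp [List.prod_append, List.prod_cons, mul_assoc]
                    _ = (x :: m₀).prod * ((r₁ :: L).prod * gs.Δ) := by rw [hkey]
                    _ = ((x :: m₀).prod * (r₁ :: L).prod) * gs.Δ := (mul_assoc _ _ _).symm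
                    _ = gs.Δ ^ (q' - (j₂ + 1)) * gs.Δ := by rw [H2]
                    _ = gs.Δ ^ ((q' - (j₂ + 1)) + 1) := (pow_succ _ _).symm
                    _ = gs.Δ ^ (q' - j₂) := by congr 1; omega)
              (by rw [hprodmap]
                  apply ldvd_cancel gs (a := y)
                  have h1 := H1
                  rw [hvpr] at h1
                  have he : y * (psi gs y * Phi gs ((r₁ :: L).prod) * gs.Δ ^ j₂) =
                      (r₁ :: L).prod * gs.Δ ^ (j₂ + 1) := by
                    calc y * (psi gs y * Phi gs ((r₁ :: L).prod) * gs.Δ ^ j₂)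
                        = (y * (psi gs y * Phi gs ((r₁ :: L).prod))) * gs.Δ ^ j₂ := by
                          simp [mul_assoc]
                      _ = ((r₁ :: L).prod * gs.Δ) * gs.Δ ^ j₂ := by rw [hkey]
                      _ = (r₁ :: L).prod * (gs.Δ * gs.Δ ^ j₂) := mul_assoc _ _ _
                      _ = (r₁ :: L).prod * gs.Δ ^ (j₂ + 1) := by rw [← pow_succ']
                  rw [he]
                  exact h1)
              (by rw [getLastD_map_cons]
                  exact Phi_rdvd gs hbot)
              (by have hn : q' - 1 - j₂ = (q' - 1 - (j₂ + 1)) + 1 := by omega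
                  calc psi gs x * gs.Δ ^ (q' - 1 - j₂)
                      = psi gs x * (gs.Δ ^ (q' - 1 - (j₂ + 1)) * gs.Δ) := by rw [hn, pow_succ]
                    _ = (psi gs x * gs.Δ ^ (q' - 1 - (j₂ + 1))) * gs.Δ := (mul_assoc _ _ _).symm
                    _ = (gs.Δ ^ (q' - 1 - (j₂ + 1)) * B) * gs.Δ := by rw [HB2]
                    _ = gs.Δ ^ (q' - 1 - (j₂ + 1)) * (B * gs.Δ) := mul_assoc _ _ _
                    _ = gs.Δ ^ (q' - 1 - (j₂ + 1)) * (gs.Δ * Phi gs B) := by rw [Phi_spec gs B]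
                    _ = (gs.Δ ^ (q' - 1 - (j₂ + 1)) * gs.Δ) * Phi gs B := (mul_assoc _ _ _).symm
                    _ = gs.Δ ^ (q' - 1 - j₂) * Phi gs B := by rw [← pow_succ, ← hn])
            rcases hrec with ⟨w, rest, k, hsplit, hprodk, h1k, hkq, hdvd⟩ | hrc
            · left
              refine ⟨y :: w, rest, k, by rw [hsplit, List.cons_append], ?_, h1k, hkq, hdvd⟩
              rw [← hprodk, List.append_cons]
            · right
              rw [hvpr, ← mul_assoc]
              have hme : m₀.prod * y = (m₀ ++ [y]).prod := by simp
              rw [hme]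
              exact hrc

end GarsideDev
namespace GarsideDev

variable {M : Type*} [Monoid M]

theorem delta_pow_eq_one {gs : GarsideMonoid M} {q : ℕ} (hq : 1 ≤ q)
    (h : gs.Δ ^ q = 1) : gs.Δ = 1 := by
  have h1 : gs.Δ * gs.Δ ^ (q - 1) = 1 := by
    rw [← pow_succ']
    have hqq : q - 1 + 1 = q := by omega
    rw [hqq]; exact h
  exact (unit_eq_one gs h1).1

theorem lemM (gs : GarsideMonoid M) (hsp : gs.SpindleType) :
    ∀ (n : ℕ) (l : List M), l.length ≤ n → (∀ a ∈ l, IsAtomOf M a) →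
    ∀ q', 1 ≤ q' → LeftDvd (gs.Δ ^ q') l.prod →
    ∃ (u D r : List M) (k : ℕ), l = u ++ D ++ r ∧ D.prod = gs.Δ ^ k ∧ 1 ≤ k ∧ k ≤ q' ∧
      LeftDvd (gs.Δ ^ (q' - k)) r.prod := by
  intro n
  induction n with
  | zero =>
      intro l hl hatoms q' hq' hdvd
      by_cases hΔ : gs.Δ = 1
      · exact ⟨[], [], l, q', by simp, by simp [hΔ], hq', le_rfl, by simpa using ldvd_one_left l.prod⟩
      exfalso
      have hl0 : l = [] := List.length_eq_zero_iff.1 (Nat.le_zero.1 hl)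
      subst hl0
      rw [List.prod_nil] at hdvd
      exact hΔ (delta_pow_eq_one hq' (eq_one_of_ldvd_one gs hdvd))
  | succ n ihn =>
      intro l hl hatoms q' hq' hdvd
      by_cases hΔ : gs.Δ = 1
      · exact ⟨[], [], l, q', by simp, by simp [hΔ], hq', le_rfl, by simpa using ldvd_one_left l.prod⟩
      cases l with
      | nil =>
          exfalso
          rw [List.prod_nil] at hdvd
          exact hΔ (delta_pow_eq_one hq' (eq_one_of_ldvd_one gs hdvd))
      | cons x v =>
          have hxA : IsAtomOf M x := hatoms x (by simp)
          have hxS : LeftDvd x gs.Δ := atom_simple gs hxA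
          have hx1 : x ≠ 1 := hxA.1
          have hv : ∀ a ∈ v, IsAtomOf M a := fun a ha => hatoms a (List.mem_cons_of_mem x ha)
          have hvlen : v.length ≤ n := by simpa using hl
          have hdvd' : LeftDvd (gs.Δ ^ q') (x * v.prod) := by
            rwa [List.prod_cons] at hdvd
          have hqsplit : gs.Δ ^ q' = gs.Δ * gs.Δ ^ (q' - 1) := by
            conv_lhs => rw [show q' = (q' - 1) + 1 by omega]
            rw [pow_succ']
          by_cases hxΔ : x = gs.Δ
          · refine ⟨[], [x], v, 1, by simp, by simp [hxΔ], le_rfl, hq', ?_⟩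
            apply ldvd_cancel gs (a := gs.Δ)
            rw [← hqsplit]
            rw [hxΔ] at hdvd'
            exact hdvd'
          have hpx1 : psi gs x ≠ 1 := fun h => hxΔ ((psi_eq_one_iff gs hxS).1 h)
          have hpxΔ : psi gs x ≠ gs.Δ := by
            intro h
            have h0 : x * gs.Δ = gs.Δ := by
              calc x * gs.Δ = x * psi gs x := by rw [h]
                _ = gs.Δ := psi_spec gs hxS
            rw [Phi_spec gs x] at h0
            have h2 : Phi gs x = 1 :=
              mul_left_cancel' gs (h0.trans (mul_one gs.Δ).symm)
            exact hx1 ((Phi_eq_one_iff gs).1 h2)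
          have hnoΔ : ¬ LeftDvd gs.Δ ((psi gs x :: ([] : List M)).prod) := by
            intro h
            rw [List.prod_cons, List.prod_nil, mul_one] at h
            exact hpxΔ (ldvd_antisymm gs h (psi_simple gs hxS)).symm
          have hmr := matcher gs hsp hxS q' v [] (psi gs x) [] (q' - 1) (psi gs x) hv
            (by intro a ha
                rcases List.mem_cons.1 ha with rfl | ha
                · exact ⟨psi_simple gs hxS, hpx1, hpxΔ⟩
                · simp at ha)
            List.Chain.nil
            hnoΔ
            (by omega)
            (by have he : q' - (q' - 1) = 1 := by omega
                rw [he, pow_one]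
                simp [psi_spec gs hxS])
            (by apply ldvd_cancel gs (a := x)
                have he : x * ((psi gs x :: ([] : List M)).prod * gs.Δ ^ (q' - 1)) =
                    gs.Δ ^ q' := by
                  rw [List.prod_cons, List.prod_nil, mul_one, ← mul_assoc,
                    psi_spec gs hxS, ← hqsplit]
                rw [he]
                exact hdvd')
            (by simp [rdvd_refl])
            (by have he : q' - 1 - (q' - 1) = 0 := by omega
                rw [he, pow_zero, one_mul, mul_one])
          rcases hmr with ⟨w, rest, k, hsplit, hprodk, h1k, hkq, hdd⟩ | hrc
          · refine ⟨[], x :: w, rest, k, ?_, ?_, h1k, hkq, hdd⟩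
            · rw [hsplit]; simp
            · rw [← hprodk]; simp
          · rw [List.prod_nil, one_mul] at hrc
            obtain ⟨u, D, r, k, hsplit, hDprod, h1k, hkq, hdd⟩ :=
              ihn v hvlen hv q' hq' hrc
            exact ⟨x :: u, D, r, k, by rw [hsplit]; simp, hDprod, h1k, hkq, hdd⟩

theorem mainAux (gs : GarsideMonoid M) (hsp : gs.SpindleType) :
    ∀ (q : ℕ) (l : List M), (∀ a ∈ l, IsAtomOf M a) →
    LeftDvd (gs.Δ ^ q) l.prod →
    ∃ (ps : List (List M × List M × ℕ)) (u : List M),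
      l = (ps.map fun p => p.1 ++ p.2.1).flatten ++ u ∧
      (∀ p ∈ ps, p.2.1.prod = gs.Δ ^ p.2.2) ∧
      (ps.map fun p => p.2.2).sum = q := by
  intro q
  induction q using Nat.strong_induction_on with
  | _ q ihq =>
    intro l hl hdvd
    rcases Nat.eq_zero_or_pos q with rfl | hq
    · exact ⟨[], l, by simp, by simp, by simp⟩
    obtain ⟨u, D, r, k, hsplit, hDprod, h1k, hkq, hdvd'⟩ :=
      lemM gs hsp l.length l le_rfl hl q hq hdvd
    have hr : ∀ a ∈ r, IsAtomOf M a := by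
      intro a ha
      apply hl
      rw [hsplit]
      simp [ha]
    obtain ⟨ps', u', hsplit', hprods', hsum'⟩ := ihq (q - k) (by omega) r hr hdvd'
    refine ⟨(u, D, k) :: ps', u', ?_, ?_, ?_⟩
    · rw [hsplit, hsplit']
      simp [List.append_assoc]
    · intro p hp
      rcases List.mem_cons.1 hp with rfl | hp
      · exact hDprod
      · exact hprods' p hp
    · simp only [List.map_cons, List.sum_cons, hsum']
      omega

end GarsideDev

/-- In a Garside monoid of spindle type, if Δ^q left-divides b then every word
    w over the atoms representing b decomposes as w ≡ u₁D₁u₂D₂⋯uₘDₘuₘ₊₁ where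
    each Dᵢ represents Δ^{qᵢ} and q₁+⋯+qₘ = q.  The decomposition is encoded by
    a list `ps` of triples (uᵢ, Dᵢ, qᵢ) together with the final factor uₘ₊₁. -/
theorem stmt_7 {M : Type*} [Monoid M] (gs : GarsideMonoid M)
    (hsp : gs.SpindleType) (b : M) (q : ℕ) (hb : LeftDvd (gs.Δ ^ q) b) :
    ∀ l : List M, (∀ x ∈ l, IsAtomOf M x) → l.prod = b →
      ∃ (ps : List (List M × List M × ℕ)) (u : List M),
        l = (ps.map fun p => p.1 ++ p.2.1).flatten ++ u ∧
        (∀ p ∈ ps, p.2.1.prod = gs.Δ ^ p.2.2) ∧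
        (ps.map fun p => p.2.2).sum = q := by
  intro l hatoms hprod
  refine GarsideDev.mainAux gs hsp q l hatoms ?_
  rw [hprod]
  exact hb
end
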